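/- Let κ be an uncountable cardinal and let No(κ) denote the set of surreal numbers of birthday less than κ. Then the linear order No(κ) is cf(κ)-saturated: for any subsets A and B of No(κ), each of cardinality strictly less than the cofinality cf(κ) of κ, such that a < b for all a ∈ A and b ∈ B, there exists a surreal number x ∈ No(κ) with a < x < b for all a ∈ A and b ∈ B (in particular, taking A or B empty, No(κ) has no subset of cardinality < cf(κ) that is cofinal or coinitial in it). -/

import Mathlib

universe u

/-- Combinatorial pregames (removed from Mathlib; restored with the Dec 2024 Mathlib meaning). -/
inductive SetTheory.PGame : Type (u + 1)
  | mk : ∀ α β : Type u, (α → SetTheory.PGame) → (β → SetTheory.PGame) → SetTheory.PGame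

namespace SetTheory.PGame

/-- The pair `(x ≤ y, x ⧏ y)`, defined by simultaneous recursion as in old Mathlib. -/
noncomputable def leLf : PGame.{u} → PGame.{u} → Prop × Prop :=
  fun x => @PGame.rec (fun _ => PGame.{u} → Prop × Prop)
    (fun xl xr xL xR ihL ihR =>
      fun y => @PGame.rec (fun _ => Prop × Prop)
        (fun yl yr yL yR jhL jhR =>
          ((∀ i, (ihL i (mk yl yr yL yR)).2) ∧ ∀ j, (jhR j).2,
            (∃ i, (jhL i).1) ∨ ∃ j, (ihR j (mk yl yr yL yR)).1)) y) x

instance : LE PGame.{u} := ⟨fun x y => (leLf x y).1⟩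

/-- `x < y` iff `x ≤ y` and `x ⧏ y` (as in old Mathlib). -/
instance : LT PGame.{u} := ⟨fun x y => (leLf x y).1 ∧ (leLf x y).2⟩

/-- Numeric pregames. -/
def Numeric : PGame.{u} → Prop
  | ⟨_, _, L, R⟩ => (∀ i j, L i < R j) ∧ (∀ i, Numeric (L i)) ∧ ∀ j, Numeric (R j)

/-- The birthday of a pregame. -/
noncomputable def birthday : PGame.{u} → Ordinal.{u}
  | ⟨_, _, xL, xR⟩ =>
    max (Ordinal.lsub.{u, u} fun i => birthday (xL i)) (Ordinal.lsub.{u, u} fun i => birthday (xR i))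

end SetTheory.PGame

/-- Surreal numbers: numeric pregames modulo `x ≤ y ∧ y ≤ x`. -/
def Surreal : Type (u + 1) :=
  Quot (fun a b : {p : SetTheory.PGame.{u} // p.Numeric} => a.1 ≤ b.1 ∧ b.1 ≤ a.1)

/-- The surreal number represented by a numeric pregame. -/
def Surreal.mk (p : SetTheory.PGame.{u}) (h : p.Numeric) : Surreal.{u} :=
  Quot.mk _ ⟨p, h⟩

/-- The order of surreals: `x < y` iff some (equivalently, any) representatives satisfy `<`. -/
instance : LT Surreal.{u} :=
  ⟨fun x y => ∃ (p q : SetTheory.PGame.{u}) (hp : p.Numeric) (hq : q.Numeric),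
    Surreal.mk p hp = x ∧ Surreal.mk q hq = y ∧ p < q⟩

open SetTheory Cardinal

/-- The birthday of a surreal number: the least birthday among numeric pregames
representing it. -/
noncomputable def Surreal.birthday (x : Surreal.{u}) : Ordinal.{u} :=
  sInf (SetTheory.PGame.birthday '' {p : SetTheory.PGame.{u} | ∃ h : p.Numeric, Surreal.mk p h = x})

namespace SetTheory.PGame

abbrev LeftMoves : PGame.{u} → Type u
  | mk l _ _ _ => l

abbrev RightMoves : PGame.{u} → Type u
  | mk _ r _ _ => r

def moveLeft : (g : PGame.{u}) → LeftMoves g → PGame.{u}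
  | mk _ _ L _ => L

def moveRight : (g : PGame.{u}) → RightMoves g → PGame.{u}
  | mk _ _ _ R => R

def LF (x y : PGame.{u}) : Prop := (leLf x y).2

theorem pg_le_mk {xl xr yl yr : Type u} {xL : xl → PGame.{u}} {xR : xr → PGame.{u}}
    {yL : yl → PGame.{u}} {yR : yr → PGame.{u}} :
    mk xl xr xL xR ≤ mk yl yr yL yR ↔
      (∀ i, LF (xL i) (mk yl yr yL yR)) ∧ ∀ j, LF (mk xl xr xL xR) (yR j) := Iff.rfl

theorem pg_lf_mk {xl xr yl yr : Type u} {xL : xl → PGame.{u}} {xR : xr → PGame.{u}}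
    {yL : yl → PGame.{u}} {yR : yr → PGame.{u}} :
    LF (mk xl xr xL xR) (mk yl yr yL yR) ↔
      (∃ i, mk xl xr xL xR ≤ yL i) ∨ ∃ j, xR j ≤ mk yl yr yL yR := Iff.rfl

theorem pg_le_iff (x y : PGame.{u}) :
    x ≤ y ↔ (∀ i, LF (x.moveLeft i) y) ∧ ∀ j, LF x (y.moveRight j) := by
  cases x; cases y; exact Iff.rfl

theorem pg_lf_iff (x y : PGame.{u}) :
    LF x y ↔ (∃ i, x ≤ y.moveLeft i) ∨ ∃ j, x.moveRight j ≤ y := by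
  cases x; cases y; exact Iff.rfl

theorem pg_lt_iff (x y : PGame.{u}) : x < y ↔ x ≤ y ∧ LF x y := Iff.rfl

theorem pg_le_refl (x : PGame.{u}) : x ≤ x := by
  induction x with
  | mk xl xr xL xR ihL ihR =>
    exact (pg_le_iff _ _).2 ⟨fun i => (pg_lf_iff _ _).2 (Or.inl ⟨i, ihL i⟩),
      fun j => (pg_lf_iff _ _).2 (Or.inr ⟨j, ihR j⟩)⟩

theorem pg_moveLeft_lf (x : PGame.{u}) (i) : LF (x.moveLeft i) x :=
  (pg_lf_iff _ _).2 (Or.inl ⟨i, pg_le_refl _⟩)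

theorem pg_lf_moveRight (x : PGame.{u}) (j) : LF x (x.moveRight j) :=
  (pg_lf_iff _ _).2 (Or.inr ⟨j, pg_le_refl _⟩)

theorem pg_not_le_lf (x : PGame.{u}) :
    ∀ y : PGame.{u}, (¬ x ≤ y ↔ LF y x) ∧ (¬ y ≤ x ↔ LF x y) := by
  induction x with
  | mk xl xr xL xR IHxl IHxr =>
    intro y
    induction y with
    | mk yl yr yL yR IHyl IHyr =>
      have h1 : ∀ i, LF (xL i) (mk yl yr yL yR) ↔ ¬ mk yl yr yL yR ≤ xL i :=
        fun i => ((IHxl i (mk yl yr yL yR)).2).symm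
      have h2 : ∀ j, LF (mk xl xr xL xR) (yR j) ↔ ¬ yR j ≤ mk xl xr xL xR :=
        fun j => (IHyr j).2.symm
      have h3 : ∀ i, LF (yL i) (mk xl xr xL xR) ↔ ¬ mk xl xr xL xR ≤ yL i :=
        fun i => (IHyl i).1.symm
      have h4 : ∀ j, LF (mk yl yr yL yR) (xR j) ↔ ¬ xR j ≤ mk yl yr yL yR :=
        fun j => (IHxr j (mk yl yr yL yR)).1.symm
      rw [pg_le_mk, pg_le_mk, pg_lf_mk, pg_lf_mk]
      simp only [h1, h2, h3, h4, not_and_or, not_forall, not_not, and_self]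

theorem pg_not_le {x y : PGame.{u}} : ¬ x ≤ y ↔ LF y x := (pg_not_le_lf x y).1

theorem pg_le_trans_aux {x y z : PGame.{u}}
    (h₁ : ∀ i, y ≤ z → z ≤ x.moveLeft i → y ≤ x.moveLeft i)
    (h₂ : ∀ j, z.moveRight j ≤ x → x ≤ y → z.moveRight j ≤ y) (hxy : x ≤ y) (hyz : y ≤ z) :
    x ≤ z := by
  refine (pg_le_iff _ _).2 ⟨fun i => pg_not_le.1 fun h => ?_, fun j => pg_not_le.1 fun h => ?_⟩
  · exact pg_not_le.2 (((pg_le_iff _ _).1 hxy).1 i) (h₁ i hyz h)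
  · exact pg_not_le.2 (((pg_le_iff _ _).1 hyz).2 j) (h₂ j h hxy)

theorem pg_le_trans_all (x : PGame.{u}) : ∀ y z : PGame.{u},
    (x ≤ y → y ≤ z → x ≤ z) ∧ (y ≤ z → z ≤ x → y ≤ x) ∧ (z ≤ x → x ≤ y → z ≤ y) := by
  induction x with
  | mk xl xr xL xR IHxl IHxr =>
    intro y
    induction y with
    | mk yl yr yL yR IHyl IHyr =>
      intro z
      induction z with
      | mk zl zr zL zR IHzl IHzr =>
        exact ⟨pg_le_trans_aux (fun i => (IHxl i _ _).2.1) (fun j => (IHzr j).2.2),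
          pg_le_trans_aux (fun i => (IHyl i _).2.2) (fun j => (IHxr j _ _).1),
          pg_le_trans_aux (fun i => (IHzl i).1) (fun j => (IHyr j _).2.1)⟩

theorem pg_le_trans {x y z : PGame.{u}} (h1 : x ≤ y) (h2 : y ≤ z) : x ≤ z :=
  (pg_le_trans_all x y z).1 h1 h2

theorem pg_lf_of_le_of_lf {x y z : PGame.{u}} (h1 : x ≤ y) (h2 : LF y z) : LF x z :=
  pg_not_le.1 fun h => pg_not_le.2 h2 (pg_le_trans h h1)

theorem pg_lf_of_lf_of_le {x y z : PGame.{u}} (h1 : LF x y) (h2 : y ≤ z) : LF x z :=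
  pg_not_le.1 fun h => pg_not_le.2 h1 (pg_le_trans h2 h)

theorem Numeric.mk {x : PGame.{u}} (h1 : ∀ i j, x.moveLeft i < x.moveRight j)
    (h2 : ∀ i, Numeric (x.moveLeft i)) (h3 : ∀ j, Numeric (x.moveRight j)) : Numeric x := by
  cases x
  rw [Numeric]
  exact ⟨h1, h2, h3⟩

theorem pg_numeric_aux (x : PGame.{u}) : Numeric x →
    (∀ i, x.moveLeft i ≤ x) ∧ ∀ j, x ≤ x.moveRight j := by
  induction x with
  | mk xl xr xL xR IHl IHr =>
    intro o
    rw [Numeric] at o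
    obtain ⟨h1, h2, h3⟩ := o
    refine ⟨fun i => (pg_le_iff _ _).2 ⟨fun k => (pg_lf_iff _ _).2 (Or.inl ⟨i, (IHl i (h2 i)).1 k⟩),
      fun j => ((pg_lt_iff _ _).1 (h1 i j)).2⟩,
      fun j => (pg_le_iff _ _).2 ⟨fun i => ((pg_lt_iff _ _).1 (h1 i j)).2,
      fun k => (pg_lf_iff _ _).2 (Or.inr ⟨j, (IHr j (h3 j)).2 k⟩)⟩⟩

theorem Numeric.moveLeft_lt {x : PGame.{u}} (o : Numeric x) (i) : x.moveLeft i < x :=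
  (pg_lt_iff _ _).2 ⟨(pg_numeric_aux x o).1 i, pg_moveLeft_lf x i⟩

theorem Numeric.lt_moveRight {x : PGame.{u}} (o : Numeric x) (j) : x < x.moveRight j :=
  (pg_lt_iff _ _).2 ⟨(pg_numeric_aux x o).2 j, pg_lf_moveRight x j⟩

theorem birthday_def (x : PGame.{u}) : birthday x =
    max (Ordinal.lsub.{u, u} fun i => birthday (x.moveLeft i))
      (Ordinal.lsub.{u, u} fun i => birthday (x.moveRight i)) := by
  cases x
  simp only [birthday, moveLeft, moveRight]

theorem pg_equiv_of_eqvGen {a b : {p : PGame.{u} // p.Numeric}}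
    (h : Relation.EqvGen (fun a b : {p : PGame.{u} // p.Numeric} => a.1 ≤ b.1 ∧ b.1 ≤ a.1) a b) :
    a.1 ≤ b.1 ∧ b.1 ≤ a.1 := by
  induction h with
  | rel _ _ h => exact h
  | refl x => exact ⟨pg_le_refl _, pg_le_refl _⟩
  | symm _ _ _ ih => exact ⟨ih.2, ih.1⟩
  | trans _ _ _ _ _ ih1 ih2 => exact ⟨pg_le_trans ih1.1 ih2.1, pg_le_trans ih2.2 ih1.2⟩

theorem lt_of_surreal_mk_lt {p q : PGame.{u}} {hp : p.Numeric} {hq : q.Numeric}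
    (h : Surreal.mk p hp < Surreal.mk q hq) : p < q := by
  obtain ⟨p', q', hp', hq', h1, h2, h3⟩ := h
  have e1 := pg_equiv_of_eqvGen (Quot.eqvGen_exact h1)
  have e2 := pg_equiv_of_eqvGen (Quot.eqvGen_exact h2)
  obtain ⟨l, f⟩ := (pg_lt_iff _ _).1 h3
  exact (pg_lt_iff _ _).2 ⟨pg_le_trans e1.2 (pg_le_trans l e2.1),
    pg_lf_of_le_of_lf e1.2 (pg_lf_of_lf_of_le f e2.1)⟩

theorem surreal_mk_lt_of_lt {p q : PGame.{u}} {hp : p.Numeric} {hq : q.Numeric} (h : p < q) :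
    Surreal.mk p hp < Surreal.mk q hq := ⟨p, q, hp, hq, rfl, rfl, h⟩

end SetTheory.PGame

private lemma surreal_birthday_exists_rep (x : Surreal.{u}) :
    ∃ p : SetTheory.PGame.{u}, ∃ h : p.Numeric, Surreal.mk p h = x ∧
      p.birthday = Surreal.birthday x := by
  have hne : (SetTheory.PGame.birthday ''
      {p : SetTheory.PGame.{u} | ∃ h : p.Numeric, Surreal.mk p h = x}).Nonempty := by
    obtain ⟨⟨p, hp⟩, rfl⟩ := Quot.exists_rep x
    exact ⟨p.birthday, p, ⟨hp, rfl⟩, rfl⟩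
  obtain ⟨p, ⟨h, hmk⟩, hb⟩ := csInf_mem hne
  exact ⟨p, h, hmk, hb⟩

/-- **Lemma 1 (order part).** For an uncountable cardinal `κ`, the linearly ordered set
`No(κ)` of surreal numbers of birthday `< κ` is `cf(κ)`-saturated: any two subsets
`A < B` of `No(κ)`, each of cardinality `< cf(κ)`, are separated by an element of `No(κ)`. -/
theorem surreal_noKappa_cof_saturated (κ : Cardinal.{u}) (hκ : Cardinal.aleph0 < κ)
    (A B : Set Surreal.{u})
    (hAκ : ∀ a ∈ A, Surreal.birthday a < κ.ord)
    (hBκ : ∀ b ∈ B, Surreal.birthday b < κ.ord)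
    (hcardA : #A < Cardinal.lift.{u + 1} κ.ord.cof)
    (hcardB : #B < Cardinal.lift.{u + 1} κ.ord.cof)
    (hAB : ∀ a ∈ A, ∀ b ∈ B, a < b) :
    ∃ x : Surreal.{u}, Surreal.birthday x < κ.ord ∧
      (∀ a ∈ A, a < x) ∧ ∀ b ∈ B, x < b := by
  -- choose representatives of minimal birthday
  choose p hp hmk hbd using fun a : A => surreal_birthday_exists_rep a.1
  choose q hq hqmk hqbd using fun b : B => surreal_birthday_exists_rep b.1
  -- smallness
  have hsA : Small.{u} A := small_iff_lift_mk_lt_univ.mpr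
    (by rw [Cardinal.lift_id]; exact hcardA.trans (Cardinal.lift_lt_univ _))
  have hsB : Small.{u} B := small_iff_lift_mk_lt_univ.mpr
    (by rw [Cardinal.lift_id]; exact hcardB.trans (Cardinal.lift_lt_univ _))
  -- the separating pregame
  set y : SetTheory.PGame.{u} :=
    ⟨Shrink.{u} A, Shrink.{u} B,
      fun i => p ((equivShrink A).symm i), fun j => q ((equivShrink B).symm j)⟩ with hy
  have hyL : ∀ i, y.moveLeft i = p ((equivShrink A).symm i) := fun i => rfl
  have hyR : ∀ j, y.moveRight j = q ((equivShrink B).symm j) := fun j => rfl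
  have hyn : y.Numeric := by
    refine SetTheory.PGame.Numeric.mk (fun i j => ?_) (fun i => hp _) (fun j => hq _)
    set a := (equivShrink A).symm i
    set b := (equivShrink B).symm j
    have : Surreal.mk (p a) (hp a) < Surreal.mk (q b) (hq b) := by
      rw [hmk a, hqmk b]; exact hAB a.1 a.2 b.1 b.2
    exact SetTheory.PGame.lt_of_surreal_mk_lt this
  refine ⟨Surreal.mk y hyn, ?_, ?_, ?_⟩
  · -- birthday bound
    have h1 : Surreal.birthday (Surreal.mk y hyn) ≤ y.birthday :=
      csInf_le (OrderBot.bddBelow _) ⟨y, ⟨hyn, rfl⟩, rfl⟩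
    refine h1.trans_lt ?_
    rw [SetTheory.PGame.birthday_def, max_lt_iff]
    constructor
    · refine Ordinal.lsub_lt_ord ?_ fun i => ?_
      · refine Cardinal.lift_lt.{u, u+1}.mp ?_
        show Cardinal.lift.{u+1} #(Shrink.{u} A) < _
        rwa [Cardinal.lift_mk_shrink''.{u+1, u} A]
      · rw [hyL, hbd]
        exact hAκ _ ((equivShrink A).symm i).2
    · refine Ordinal.lsub_lt_ord ?_ fun j => ?_
      · refine Cardinal.lift_lt.{u, u+1}.mp ?_
        show Cardinal.lift.{u+1} #(Shrink.{u} B) < _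
        rwa [Cardinal.lift_mk_shrink''.{u+1, u} B]
      · rw [hyR, hqbd]
        exact hBκ _ ((equivShrink B).symm j).2
  · intro a ha
    have := SetTheory.PGame.Numeric.moveLeft_lt hyn (equivShrink A ⟨a, ha⟩)
    rw [hyL, (equivShrink A).symm_apply_apply] at this
    have h2 : Surreal.mk (p ⟨a, ha⟩) (hp _) < Surreal.mk y hyn := SetTheory.PGame.surreal_mk_lt_of_lt this
    rwa [hmk] at h2
  · intro b hb
    have := SetTheory.PGame.Numeric.lt_moveRight hyn (equivShrink B ⟨b, hb⟩)
    rw [hyR, (equivShrink B).symm_apply_apply] at this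
    have h2 : Surreal.mk y hyn < Surreal.mk (q ⟨b, hb⟩) (hq _) := SetTheory.PGame.surreal_mk_lt_of_lt this
    rwa [hqmk] at h2
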